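/- The second derivative of log f satisfies (d²/dy²) log f_{X+Z}(y) = Var(X | X+Z = y) - 1 ≥ -1, where f_{X+Z} is the density of X+Z with Z standard normal independent of X, and X a bounded random variable. Consequently, if y₀ is a global maximum of f_{X+Z}, then for all y: log f_{X+Z}(y) ≥ log f_{X+Z}(y₀) - (1/2)(y - y₀)². -/

import Mathlib

open Real MeasureTheory

noncomputable def stdNormalPdf (t : ℝ) : ℝ := (Real.sqrt (2 * π))⁻¹ * Real.exp (-t ^ 2 / 2)

lemma phi_pos (t : ℝ) : 0 < stdNormalPdf t := by
  unfold stdNormalPdf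
  positivity

lemma phi_le_one (t : ℝ) : stdNormalPdf t ≤ 1 := by
  unfold stdNormalPdf
  have h1 : Real.exp (-t ^ 2 / 2) ≤ 1 := by
    rw [Real.exp_le_one_iff]
    nlinarith [sq_nonneg t]
  have h2 : (1:ℝ) ≤ Real.sqrt (2 * π) := by
    rw [show (1:ℝ) = Real.sqrt 1 by simp]
    exact Real.sqrt_le_sqrt (by nlinarith [Real.pi_gt_three])
  have h3 : (Real.sqrt (2 * π))⁻¹ ≤ 1 := by
    rw [inv_le_one_iff₀]; right; exact h2
  nlinarith [Real.exp_pos (-t^2/2), (show (0:ℝ) < (Real.sqrt (2*π))⁻¹ by positivity)]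

lemma hasDerivAt_phi (t : ℝ) : HasDerivAt stdNormalPdf (-t * stdNormalPdf t) t := by
  unfold stdNormalPdf
  have h1 : HasDerivAt (fun s : ℝ => -s ^ 2 / 2) (-t) t := by
    have := ((hasDerivAt_pow 2 t).neg).div_const 2
    refine this.congr_deriv ?_
    simp; ring
  have h2 := (h1.exp).const_mul (Real.sqrt (2 * π))⁻¹
  refine h2.congr_deriv ?_
  ring

lemma continuous_phi : Continuous stdNormalPdf := by
  unfold stdNormalPdf
  continuity

lemma integrable_key (A : ℝ) (P : Measure ℝ) [IsProbabilityMeasure P]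
    (hsupp : ∀ᵐ x ∂P, x ∈ Set.Icc (-A) A) (w : ℝ → ℝ) (hw : Continuous w) (g : ℝ → ℝ)
    (hg : Continuous g) :
    Integrable (fun x => w x * stdNormalPdf (g x)) P := by
  obtain ⟨C, hC⟩ := (isCompact_Icc (a := -A) (b := A)).exists_bound_of_continuousOn
    hw.continuousOn
  refine Integrable.mono' (integrable_const C) ?_ ?_
  · exact ((hw.mul (continuous_phi.comp hg))).aestronglyMeasurable
  · filter_upwards [hsupp] with x hx
    have h1 := hC x hx
    have h2 := phi_le_one (g x)
    have h3 := (phi_pos (g x)).le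
    rw [Real.norm_eq_abs, abs_mul, abs_of_nonneg h3]
    calc |w x| * stdNormalPdf (g x) ≤ C * 1 := by
          apply mul_le_mul (by simpa using h1) h2 h3
          exact le_trans (abs_nonneg _) (by simpa using h1)
      _ = C := mul_one C

lemma key (A : ℝ) (P : Measure ℝ) [IsProbabilityMeasure P]
    (hsupp : ∀ᵐ x ∂P, x ∈ Set.Icc (-A) A) (w : ℝ → ℝ) (hw : Continuous w) (y : ℝ) :
    HasDerivAt (fun u => ∫ x, w x * stdNormalPdf (u - x) ∂P)
      (∫ x, w x * ((x - y) * stdNormalPdf (y - x)) ∂P) y := by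
  obtain ⟨C, hC⟩ := (isCompact_Icc (a := -A) (b := A)).exists_bound_of_continuousOn
    hw.continuousOn
  have key := hasDerivAt_integral_of_dominated_loc_of_deriv_le
    (F := fun u x => w x * stdNormalPdf (u - x))
    (F' := fun u x => w x * ((x - u) * stdNormalPdf (u - x)))
    (x₀ := y) (μ := P) (bound := fun _ => C * ((|y| + 1 + |A|) * 1)) (s := Metric.ball y 1) (Metric.ball_mem_nhds y one_pos)
    ?_ ?_ ?_ ?_ ?_ ?_
  · exact key.2
  · filter_upwards with u
    exact ((hw.mul (continuous_phi.comp (continuous_const.sub continuous_id)))).aestronglyMeasurable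
  · exact integrable_key A P hsupp w hw _ (continuous_const.sub continuous_id)
  · apply Continuous.aestronglyMeasurable
    exact hw.mul ((continuous_id.sub continuous_const).mul
      (continuous_phi.comp (continuous_const.sub continuous_id)))
  · filter_upwards [hsupp] with x hx u hu
    have h1 := hC x hx
    rw [Real.norm_eq_abs, abs_mul, abs_mul, abs_of_nonneg (phi_pos (u - x)).le]
    have hxA : |x| ≤ |A| := by
      rw [abs_le]; constructor <;> [exact le_trans (neg_le_neg (le_abs_self A)) hx.1;
        exact le_trans hx.2 (le_abs_self A)]
    have hxu : |x - u| ≤ |y| + 1 + |A| := by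
      have : |u - y| < 1 := by simpa [Real.dist_eq] using hu
      calc |x - u| ≤ |x| + |u| := abs_sub _ _
        _ ≤ |A| + (|y| + 1) := by
            have : |u| ≤ |y| + 1 := by
              calc |u| = |y + (u - y)| := by ring_nf
                _ ≤ |y| + |u - y| := abs_add_le _ _
                _ ≤ |y| + 1 := by linarith
            linarith
        _ = |y| + 1 + |A| := by ring
    have h2 := phi_le_one (u - x)
    have h3 := (phi_pos (u - x)).le
    have hCnn : 0 ≤ C := le_trans (norm_nonneg _) h1
    have hpos : (0:ℝ) ≤ |y| + 1 + |A| := by positivity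
    exact mul_le_mul (by simpa using h1) (mul_le_mul hxu h2 h3 hpos)
      (by positivity) hCnn
  · exact integrable_const _
  · filter_upwards with x u _
    have h1 : HasDerivAt (fun u : ℝ => u - x) 1 u := (hasDerivAt_id u).sub_const x
    have h2 := (hasDerivAt_phi (u - x)).comp u h1
    have h3 := h2.const_mul (w x)
    refine h3.congr_deriv ?_
    ring

lemma f_pos (A : ℝ) (P : Measure ℝ) [IsProbabilityMeasure P]
    (hsupp : ∀ᵐ x ∂P, x ∈ Set.Icc (-A) A) (y : ℝ) :
    0 < ∫ x, stdNormalPdf (y - x) ∂P := by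
  set ε := stdNormalPdf (|y| + |A|) with hε
  have hεpos : 0 < ε := phi_pos _
  have hInt : Integrable (fun x => stdNormalPdf (y - x)) P := by
    simpa using integrable_key A P hsupp (fun _ => 1) continuous_const
      (fun x => y - x) (continuous_const.sub continuous_id)
  have hmono : ∀ᵐ x ∂P, ε ≤ stdNormalPdf (y - x) := by
    filter_upwards [hsupp] with x hx
    rw [hε]
    unfold stdNormalPdf
    have h1 : (y - x) ^ 2 ≤ (|y| + |A|) ^ 2 := by
      have hxA : |x| ≤ |A| := by
        rw [abs_le]
        exact ⟨le_trans (neg_le_neg (le_abs_self A)) hx.1, le_trans hx.2 (le_abs_self A)⟩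
      have : |y - x| ≤ |y| + |A| := le_trans (abs_sub _ _) (by linarith)
      nlinarith [abs_nonneg (y - x), sq_abs (y - x), sq_abs y, abs_nonneg y]
    have : Real.exp (-(|y| + |A|) ^ 2 / 2) ≤ Real.exp (-(y - x) ^ 2 / 2) :=
      Real.exp_le_exp.2 (by linarith)
    have hc : (0:ℝ) < (Real.sqrt (2 * π))⁻¹ := by positivity
    nlinarith
  have h2 : ε ≤ ∫ x, stdNormalPdf (y - x) ∂P := by
    have := integral_mono_ae (integrable_const ε) hInt hmono
    simpa using this
  linarith

theorem stmt_2 (A : ℝ) (hA : 0 < A) (P : Measure ℝ) [IsProbabilityMeasure P]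
    (hsupp : ∀ᵐ x ∂P, x ∈ Set.Icc (-A) A)
    (f m v : ℝ → ℝ)
    (hf : ∀ y, f y = ∫ x, stdNormalPdf (y - x) ∂P)
    (hm : ∀ y, m y = (∫ x, x * stdNormalPdf (y - x) ∂P) / f y)
    (hv : ∀ y, v y = (∫ x, x ^ 2 * stdNormalPdf (y - x) ∂P) / f y - (m y) ^ 2) :
    (∀ y, deriv (deriv (fun t => Real.log (f t))) y = v y - 1 ∧ -1 ≤ v y - 1) ∧
    (∀ y₀ : ℝ, (∀ y, f y ≤ f y₀) →
      ∀ y, Real.log (f y) ≥ Real.log (f y₀) - (y - y₀) ^ 2 / 2) := by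
  have intK : ∀ (w : ℝ → ℝ), Continuous w → ∀ y,
      Integrable (fun x => w x * stdNormalPdf (y - x)) P :=
    fun w hw y => integrable_key A P hsupp w hw _ (continuous_const.sub continuous_id)
  set N1 : ℝ → ℝ := fun y => ∫ x, x * stdNormalPdf (y - x) ∂P with hN1def
  set N2 : ℝ → ℝ := fun y => ∫ x, x ^ 2 * stdNormalPdf (y - x) ∂P with hN2def
  have hfpos : ∀ y, 0 < f y := fun y => by rw [hf]; exact f_pos A P hsupp y
  have hfne : ∀ y, f y ≠ 0 := fun y => (hfpos y).ne'
  have hDf : ∀ y, HasDerivAt f (N1 y - y * f y) y := by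
    intro y
    have h := key A P hsupp (fun _ => 1) continuous_const y
    have heq : (fun u => ∫ x, (1:ℝ) * stdNormalPdf (u - x) ∂P) = f := by
      funext u; rw [hf]; simp
    rw [heq] at h
    convert h using 1
    have e : (fun x => (1:ℝ) * ((x - y) * stdNormalPdf (y - x)))
        = fun x => x * stdNormalPdf (y - x) - y * ((1:ℝ) * stdNormalPdf (y - x)) := by
      funext x; ring
    rw [e, integral_sub (show Integrable (fun x : ℝ => x * stdNormalPdf (y - x)) P from
        intK (fun x => x) continuous_id y)
      ((intK (fun _ => (1:ℝ)) continuous_const y).const_mul y), integral_const_mul]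
    rw [hf y]
    simp [hN1def]
  have hDN1 : ∀ y, HasDerivAt N1 (N2 y - y * N1 y) y := by
    intro y
    have h := key A P hsupp (fun x => x) continuous_id y
    convert h using 1
    have e : (fun x => x * ((x - y) * stdNormalPdf (y - x)))
        = fun x => x ^ 2 * stdNormalPdf (y - x) - y * (x * stdNormalPdf (y - x)) := by
      funext x; ring
    rw [e, integral_sub (show Integrable (fun x : ℝ => x ^ 2 * stdNormalPdf (y - x)) P from
        intK (fun x => x ^ 2) (by continuity) y)
      (show Integrable (fun x : ℝ => y * (x * stdNormalPdf (y - x))) P from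
        (intK (fun x => x) continuous_id y).const_mul y), integral_const_mul]
  set M : ℝ → ℝ := fun y => N1 y / f y with hMdef
  set V : ℝ → ℝ := fun y => N2 y / f y - (M y) ^ 2 with hVdef
  have hmM : ∀ y, m y = M y := fun y => hm y
  have hvV : ∀ y, v y = V y := fun y => by rw [hv y, hmM y]
  have hDM : ∀ y, HasDerivAt M (V y) y := by
    intro y
    have h := (hDN1 y).div (hDf y) (hfne y)
    refine h.congr_deriv ?_
    have hfy := hfne y
    rw [hVdef, hMdef]
    field_simp
    ring
  have hDlog : ∀ y, HasDerivAt (fun t => Real.log (f t)) (M y - y) y := by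
    intro y
    have h := (hDf y).log (hfne y)
    convert h using 1
    have hfy := hfne y
    rw [hMdef]
    field_simp
  have hderiv1 : deriv (fun t => Real.log (f t)) = fun y => M y - y :=
    funext fun y => (hDlog y).deriv
  have hD2 : ∀ y, HasDerivAt (fun y => M y - y) (V y - 1) y :=
    fun y => (hDM y).sub (hasDerivAt_id y)
  have hVnn : ∀ y, 0 ≤ V y := by
    intro y
    set c := M y with hc
    have hint : ∫ x, (x - c) ^ 2 * stdNormalPdf (y - x) ∂P
        = N2 y - 2 * c * N1 y + c ^ 2 * f y := by
      have e : (fun x => (x - c) ^ 2 * stdNormalPdf (y - x))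
          = fun x => (x ^ 2 * stdNormalPdf (y - x) - (2 * c) * (x * stdNormalPdf (y - x)))
            + c ^ 2 * ((1:ℝ) * stdNormalPdf (y - x)) := by
        funext x; ring
      have I2 : Integrable (fun x : ℝ => x ^ 2 * stdNormalPdf (y - x)) P :=
        intK (fun x => x ^ 2) (by continuity) y
      have I1 : Integrable (fun x : ℝ => (2 * c) * (x * stdNormalPdf (y - x))) P :=
        (intK (fun x => x) continuous_id y).const_mul (2 * c)
      have I0 : Integrable (fun x : ℝ => c ^ 2 * ((1:ℝ) * stdNormalPdf (y - x))) P :=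
        (intK (fun _ => (1:ℝ)) continuous_const y).const_mul (c ^ 2)
      have Isub : Integrable (fun x : ℝ => x ^ 2 * stdNormalPdf (y - x)
          - (2 * c) * (x * stdNormalPdf (y - x))) P := I2.sub I1
      rw [e, integral_add Isub I0, integral_sub I2 I1, integral_const_mul, integral_const_mul]
      rw [hf y]
      simp only [hN1def, hN2def, one_mul]
    have hnn : 0 ≤ ∫ x, (x - c) ^ 2 * stdNormalPdf (y - x) ∂P :=
      integral_nonneg fun x => mul_nonneg (sq_nonneg _) (phi_pos _).le
    have hN1e : N1 y = c * f y := by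
      rw [hc, hMdef]
      exact (div_mul_cancel₀ _ (hfne y)).symm
    have hVeq : V y = (∫ x, (x - c) ^ 2 * stdNormalPdf (y - x) ∂P) / f y := by
      rw [hint, hN1e]
      show N2 y / f y - c ^ 2 = _
      have hfy := hfne y
      field_simp
      ring
    rw [hVeq]
    exact div_nonneg hnn (hfpos y).le
  constructor
  · intro y
    refine ⟨?_, by have := hVnn y; rw [hvV y]; linarith⟩
    rw [hderiv1, (hD2 y).deriv, hvV y]
  · intro y₀ hmax y
    have hle : ∀ t, Real.log (f t) ≤ Real.log (f y₀) := fun t =>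
      Real.log_le_log (hfpos t) (hmax t)
    have hcrit : M y₀ - y₀ = 0 := by
      have hloc : IsLocalMax (fun t => Real.log (f t)) y₀ :=
        Filter.Eventually.of_forall hle
      exact hloc.hasDerivAt_eq_zero (hDlog y₀)
    have hMy₀ : M y₀ = y₀ := by linarith
    have hDh : ∀ t, HasDerivAt (fun t => Real.log (f t) + t ^ 2 / 2) (M t) t := by
      intro t
      have h2 : HasDerivAt (fun t : ℝ => t ^ 2 / 2) t t := by
        have := (hasDerivAt_pow 2 t).div_const 2
        refine this.congr_deriv ?_
        simp
      have := (hDlog t).add h2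
      refine this.congr_deriv ?_
      ring
    have hMmono : Monotone M := by
      apply monotone_of_deriv_nonneg (fun t => (hDM t).differentiableAt)
      intro t; rw [(hDM t).deriv]; exact hVnn t
    have hcont : ∀ s : Set ℝ, ContinuousOn (fun t => Real.log (f t) + t ^ 2 / 2) s :=
      fun s => (Continuous.continuousOn (continuous_iff_continuousAt.2
        fun t => (hDh t).continuousAt))
    have hsuff : Real.log (f y) + y ^ 2 / 2
        ≥ Real.log (f y₀) + y₀ ^ 2 / 2 + y₀ * (y - y₀) := by
      rcases lt_trichotomy y y₀ with hlt | heq | hgt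
      · obtain ⟨c, hcmem, hceq⟩ := exists_hasDerivAt_eq_slope
          (fun t => Real.log (f t) + t ^ 2 / 2) M hlt (hcont _) (fun x _ => hDh x)
        have hMc : M c ≤ y₀ := by rw [← hMy₀]; exact hMmono hcmem.2.le
        rw [hceq] at hMc
        rw [div_le_iff₀ (by linarith)] at hMc
        nlinarith
      · subst heq; simp
      · obtain ⟨c, hcmem, hceq⟩ := exists_hasDerivAt_eq_slope
          (fun t => Real.log (f t) + t ^ 2 / 2) M hgt (hcont _) (fun x _ => hDh x)
        have hMc : y₀ ≤ M c := by rw [← hMy₀]; exact hMmono hcmem.1.le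
        rw [hceq] at hMc
        rw [le_div_iff₀ (by linarith)] at hMc
        nlinarith
    nlinarith [hsuff]
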